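/- For any probability measure ρ on S^{d-1} with mean E and Gibbs mean v_α, one has ⟨E, v_α⟩ = V(ρ) + (|E|^2 + |v_α|^2)/2 − (1/2)∫|v − v_α|^2 dρ, and consequently ⟨E, v_α⟩ ≥ V(ρ) + (|E|^2 + |v_α|^2)/2 − 2 C_{α,E} V(ρ). -/

import Mathlib

open MeasureTheory Metric Real

set_option maxHeartbeats 1000000 in
theorem stmt_12 {d : ℕ} (e : EuclideanSpace ℝ (Fin d) → ℝ) (α : ℝ) (hα : 0 < α)
    (hcont : ContinuousOn e (sphere (0 : EuclideanSpace ℝ (Fin d)) 1))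
    (hbdd : BddAbove (e '' sphere (0 : EuclideanSpace ℝ (Fin d)) 1) ∧
      BddBelow (e '' sphere (0 : EuclideanSpace ℝ (Fin d)) 1))
    (ρ : Measure (EuclideanSpace ℝ (Fin d))) [IsProbabilityMeasure ρ]
    (hsph : ∀ᵐ v ∂ρ, ‖v‖ = 1)
    (E : EuclideanSpace ℝ (Fin d)) (hE : E = ∫ w, w ∂ρ)
    (V : ℝ) (hV : V = (1 / 2) * ∫ v, ‖v - E‖ ^ 2 ∂ρ)
    (vα : EuclideanSpace ℝ (Fin d))
    (hvα : vα = (∫ v, Real.exp (-α * e v) ∂ρ)⁻¹ • ∫ v, Real.exp (-α * e v) • v ∂ρ)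
    (C : ℝ)
    (hC : C = Real.exp (α * (sSup (e '' sphere (0 : EuclideanSpace ℝ (Fin d)) 1)
      - sInf (e '' sphere (0 : EuclideanSpace ℝ (Fin d)) 1)))) :
    (inner ℝ E vα : ℝ) = V + (‖E‖ ^ 2 + ‖vα‖ ^ 2) / 2 - (1 / 2) * ∫ v, ‖v - vα‖ ^ 2 ∂ρ ∧
      V + (‖E‖ ^ 2 + ‖vα‖ ^ 2) / 2 - 2 * C * V ≤ (inner ℝ E vα : ℝ) := by
  set S := sphere (0 : EuclideanSpace ℝ (Fin d)) 1 with hSdef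
  have hSmeas : MeasurableSet S := Metric.isClosed_sphere.measurableSet
  have hmem : ∀ᵐ v ∂ρ, v ∈ S := by
    filter_upwards [hsph] with v hv
    simpa [hSdef, mem_sphere_iff_norm] using hv
  have hrestrict : ρ.restrict S = ρ := Measure.restrict_eq_self_of_ae_mem hmem
  set a := sInf (e '' S) with ha
  set b := sSup (e '' S) with hb
  set w : EuclideanSpace ℝ (Fin d) → ℝ := fun v => Real.exp (-α * e v) with hwdef
  set lb := Real.exp (-α * b) with hlb
  set ub := Real.exp (-α * a) with hub
  have hlb_pos : 0 < lb := Real.exp_pos _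
  have hub_pos : 0 < ub := Real.exp_pos _
  -- pointwise bounds on the weight
  have hwS : ∀ v ∈ S, lb ≤ w v ∧ w v ≤ ub := by
    intro v hv
    have h1 : a ≤ e v := csInf_le hbdd.2 ⟨v, hv, rfl⟩
    have h2 : e v ≤ b := le_csSup hbdd.1 ⟨v, hv, rfl⟩
    constructor
    · exact Real.exp_le_exp.2 (by nlinarith)
    · exact Real.exp_le_exp.2 (by nlinarith)
  have hwae : ∀ᵐ v ∂ρ, lb ≤ w v ∧ w v ≤ ub := by
    filter_upwards [hmem] with v hv using hwS v hv
  -- measurability of the weight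
  have hwcont : ContinuousOn w S :=
    Real.continuous_exp.comp_continuousOn (continuousOn_const.mul hcont)
  have hw_meas : AEStronglyMeasurable w ρ := by
    rw [← hrestrict]
    exact (hwcont.aemeasurable hSmeas).aestronglyMeasurable
  -- integrabilities
  have Iw : Integrable w ρ := by
    refine Integrable.mono' (integrable_const ub) hw_meas ?_
    filter_upwards [hwae] with v hv
    rw [Real.norm_eq_abs, abs_of_pos (Real.exp_pos _)]
    exact hv.2
  have Iv : Integrable (fun v : EuclideanSpace ℝ (Fin d) => v) ρ := by
    refine Integrable.mono' (integrable_const 1) aestronglyMeasurable_id ?_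
    filter_upwards [hsph] with v hv using le_of_eq hv
  have Iwv : Integrable (fun v => w v • v) ρ := by
    refine Integrable.mono' (integrable_const ub) (hw_meas.smul aestronglyMeasurable_id) ?_
    filter_upwards [hsph, hwae] with v hv hw2
    rw [norm_smul, Real.norm_eq_abs, abs_of_pos (Real.exp_pos _), hv, mul_one]
    exact hw2.2
  have Insq : ∀ u : EuclideanSpace ℝ (Fin d), Integrable (fun v => ‖v - u‖ ^ 2) ρ := by
    intro u
    refine Integrable.mono' (integrable_const ((1 + ‖u‖) ^ 2))
      (((continuous_id.sub continuous_const).norm.pow 2).aestronglyMeasurable) ?_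
    filter_upwards [hsph] with v hv
    rw [Real.norm_eq_abs, abs_of_nonneg (sq_nonneg _)]
    have h1 : ‖v - u‖ ≤ 1 + ‖u‖ := by
      calc ‖v - u‖ ≤ ‖v‖ + ‖u‖ := norm_sub_le _ _
      _ = 1 + ‖u‖ := by rw [hv]
    nlinarith [norm_nonneg (v - u)]
  have Iwnsq : ∀ u : EuclideanSpace ℝ (Fin d),
      Integrable (fun v => w v * ‖v - u‖ ^ 2) ρ := by
    intro u
    refine Integrable.mono' (integrable_const (ub * (1 + ‖u‖) ^ 2))
      (hw_meas.mul ((continuous_id.sub continuous_const).norm.pow 2).aestronglyMeasurable) ?_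
    filter_upwards [hsph, hwae] with v hv hw2
    rw [Real.norm_eq_abs, abs_of_nonneg (mul_nonneg (Real.exp_pos _).le (sq_nonneg _))]
    have h1 : ‖v - u‖ ≤ 1 + ‖u‖ := by
      calc ‖v - u‖ ≤ ‖v‖ + ‖u‖ := norm_sub_le _ _
      _ = 1 + ‖u‖ := by rw [hv]
    have h2 : ‖v - u‖ ^ 2 ≤ (1 + ‖u‖) ^ 2 := by nlinarith [norm_nonneg (v - u)]
    exact mul_le_mul hw2.2 h2 (sq_nonneg _) hub_pos.le
  have In2 : Integrable (fun v : EuclideanSpace ℝ (Fin d) => ‖v‖ ^ 2) ρ := by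
    simpa using Insq 0
  have Iwn2 : Integrable (fun v => w v * ‖v‖ ^ 2) ρ := by
    simpa using Iwnsq 0
  -- integral of ‖v‖² is 1
  have normsq1 : ∫ v, ‖v‖ ^ 2 ∂ρ = 1 := by
    have : (fun v : EuclideanSpace ℝ (Fin d) => ‖v‖ ^ 2) =ᵐ[ρ] fun _ => (1 : ℝ) := by
      filter_upwards [hsph] with v hv; rw [hv]; norm_num
    rw [integral_congr_ae this, integral_const]; simp
  -- key unweighted identity
  have keyA : ∀ u : EuclideanSpace ℝ (Fin d),
      ∫ v, ‖v - u‖ ^ 2 ∂ρ = 1 - 2 * (inner ℝ E u : ℝ) + ‖u‖ ^ 2 := by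
    intro u
    have hptw : ∀ v : EuclideanSpace ℝ (Fin d),
        ‖v - u‖ ^ 2 = ‖v‖ ^ 2 - 2 * ((innerSL ℝ u) v) + ‖u‖ ^ 2 := by
      intro v
      rw [@norm_sub_sq_real _ _ _ v u, innerSL_apply_apply, real_inner_comm]
    have Iin : Integrable (fun v => (innerSL ℝ u) v) ρ :=
      (innerSL ℝ u).integrable_comp Iv
    calc ∫ v, ‖v - u‖ ^ 2 ∂ρ
        = ∫ v, (‖v‖ ^ 2 - 2 * ((innerSL ℝ u) v) + ‖u‖ ^ 2) ∂ρ := by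
          exact integral_congr_ae (Filter.Eventually.of_forall hptw)
      _ = (∫ v, ‖v‖ ^ 2 ∂ρ) - 2 * (∫ v, (innerSL ℝ u) v ∂ρ) + ‖u‖ ^ 2 := by
          have Isub : Integrable (fun v => ‖v‖ ^ 2 - 2 * ((innerSL ℝ u) v)) ρ :=
            In2.sub (Iin.const_mul 2)
          rw [integral_add Isub (integrable_const _),
            integral_sub In2 (Iin.const_mul 2), integral_const_mul, integral_const]
          simp
      _ = 1 - 2 * (inner ℝ E u : ℝ) + ‖u‖ ^ 2 := by
          rw [normsq1, ContinuousLinearMap.integral_comp_comm _ Iv, innerSL_apply_apply,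
            ← hE, real_inner_comm]
  -- part 1
  have hEE : (inner ℝ E E : ℝ) = ‖E‖ ^ 2 := real_inner_self_eq_norm_sq E
  have h1 : (inner ℝ E vα : ℝ)
      = V + (‖E‖ ^ 2 + ‖vα‖ ^ 2) / 2 - (1 / 2) * ∫ v, ‖v - vα‖ ^ 2 ∂ρ := by
    rw [hV, keyA E, keyA vα]
    linarith
  refine ⟨h1, ?_⟩
  -- part 2
  set m := ∫ v, w v ∂ρ with hm
  set J := ∫ v, w v • v ∂ρ with hJdef
  have hSne : S.Nonempty := by
    by_contra h
    rw [Set.not_nonempty_iff_eq_empty] at h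
    have h0 : ρ Set.univ = 0 := by
      have := hmem
      rw [h] at this
      simpa [ae_iff] using this
    simp [measure_univ] at h0
  have hm_pos : 0 < m := by
    have hle : lb ≤ m := by
      have := integral_mono_ae (integrable_const lb) Iw
        (by filter_upwards [hwae] with v hv using hv.1)
      simpa using this
    linarith
  have hJ : J = m • vα := by
    rw [hvα, smul_smul, mul_inv_cancel₀ hm_pos.ne', one_smul]
  -- weighted identity
  have keyB : ∀ u : EuclideanSpace ℝ (Fin d),
      ∫ v, w v * ‖v - u‖ ^ 2 ∂ρ
        = (∫ v, w v * ‖v‖ ^ 2 ∂ρ) - 2 * (inner ℝ J u : ℝ) + m * ‖u‖ ^ 2 := by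
    intro u
    have hptw : ∀ v : EuclideanSpace ℝ (Fin d),
        w v * ‖v - u‖ ^ 2
          = w v * ‖v‖ ^ 2 - 2 * ((innerSL ℝ u) (w v • v)) + w v * ‖u‖ ^ 2 := by
      intro v
      rw [innerSL_apply_apply, real_inner_smul_right, @norm_sub_sq_real _ _ _ v u, real_inner_comm]
      ring
    have Iwin : Integrable (fun v => (innerSL ℝ u) (w v • v)) ρ :=
      (innerSL ℝ u).integrable_comp Iwv
    calc ∫ v, w v * ‖v - u‖ ^ 2 ∂ρ
        = ∫ v, (w v * ‖v‖ ^ 2 - 2 * ((innerSL ℝ u) (w v • v)) + w v * ‖u‖ ^ 2) ∂ρ :=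
          integral_congr_ae (Filter.Eventually.of_forall hptw)
      _ = (∫ v, w v * ‖v‖ ^ 2 ∂ρ) - 2 * (∫ v, (innerSL ℝ u) (w v • v) ∂ρ)
            + (∫ v, w v ∂ρ) * ‖u‖ ^ 2 := by
          have Isub : Integrable (fun v => w v * ‖v‖ ^ 2 - 2 * ((innerSL ℝ u) (w v • v))) ρ :=
            Iwn2.sub (Iwin.const_mul 2)
          have Imc : Integrable (fun v => w v * ‖u‖ ^ 2) ρ := Iw.mul_const _
          rw [integral_add Isub Imc,
            integral_sub Iwn2 (Iwin.const_mul 2), integral_const_mul, integral_mul_const]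
      _ = (∫ v, w v * ‖v‖ ^ 2 ∂ρ) - 2 * (inner ℝ J u : ℝ) + m * ‖u‖ ^ 2 := by
          rw [ContinuousLinearMap.integral_comp_comm _ Iwv, innerSL_apply_apply,
            ← hJdef, real_inner_comm, ← hm]
  -- vα minimizes the weighted quadratic
  have hdiff : ∫ v, w v * ‖v - vα‖ ^ 2 ∂ρ ≤ ∫ v, w v * ‖v - E‖ ^ 2 ∂ρ := by
    rw [keyB vα, keyB E]
    have hJv : (inner ℝ J vα : ℝ) = m * ‖vα‖ ^ 2 := by
      rw [hJ, real_inner_smul_left, real_inner_self_eq_norm_sq]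
    have hJE : (inner ℝ J E : ℝ) = m * (inner ℝ vα E : ℝ) := by
      rw [hJ, real_inner_smul_left]
    have hexp : ‖vα - E‖ ^ 2 = ‖vα‖ ^ 2 - 2 * (inner ℝ vα E : ℝ) + ‖E‖ ^ 2 :=
      norm_sub_sq_real vα E
    have hkey : m * ‖vα - E‖ ^ 2
        = m * ‖vα‖ ^ 2 - 2 * (m * (inner ℝ vα E : ℝ)) + m * ‖E‖ ^ 2 := by
      rw [hexp]; ring
    have hnn : 0 ≤ m * ‖vα - E‖ ^ 2 := mul_nonneg hm_pos.le (sq_nonneg _)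
    linarith
  -- sandwich
  have hlow : lb * ∫ v, ‖v - vα‖ ^ 2 ∂ρ ≤ ∫ v, w v * ‖v - vα‖ ^ 2 ∂ρ := by
    rw [← integral_const_mul]
    refine integral_mono_ae ((Insq vα).const_mul lb) (Iwnsq vα) ?_
    filter_upwards [hwae] with v hv
    exact mul_le_mul_of_nonneg_right hv.1 (sq_nonneg _)
  have hhigh : ∫ v, w v * ‖v - E‖ ^ 2 ∂ρ ≤ ub * ∫ v, ‖v - E‖ ^ 2 ∂ρ := by
    rw [← integral_const_mul]
    refine integral_mono_ae (Iwnsq E) ((Insq E).const_mul ub) ?_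
    filter_upwards [hwae] with v hv
    exact mul_le_mul_of_nonneg_right hv.2 (sq_nonneg _)
  have hClb : C * lb = ub := by
    rw [hC, hlb, hub, ← Real.exp_add]
    congr 1
    ring
  have hC_pos : 0 < C := by rw [hC]; exact Real.exp_pos _
  have hV_nonneg : 0 ≤ V := by
    rw [hV]
    have : 0 ≤ ∫ v, ‖v - E‖ ^ 2 ∂ρ :=
      integral_nonneg fun v => sq_nonneg _
    linarith
  have hXY : lb * ∫ v, ‖v - vα‖ ^ 2 ∂ρ ≤ ub * ∫ v, ‖v - E‖ ^ 2 ∂ρ :=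
    le_trans hlow (le_trans hdiff hhigh)
  have hX : ∫ v, ‖v - vα‖ ^ 2 ∂ρ ≤ C * ∫ v, ‖v - E‖ ^ 2 ∂ρ := by
    have h2 : lb * ∫ v, ‖v - vα‖ ^ 2 ∂ρ ≤ lb * (C * ∫ v, ‖v - E‖ ^ 2 ∂ρ) := by
      calc lb * ∫ v, ‖v - vα‖ ^ 2 ∂ρ ≤ ub * ∫ v, ‖v - E‖ ^ 2 ∂ρ := hXY
        _ = lb * (C * ∫ v, ‖v - E‖ ^ 2 ∂ρ) := by rw [← hClb]; ring
    exact le_of_mul_le_mul_left h2 hlb_pos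
  have hXnn : 0 ≤ ∫ v, ‖v - vα‖ ^ 2 ∂ρ := integral_nonneg fun v => sq_nonneg _
  have hCV : C * ∫ v, ‖v - E‖ ^ 2 ∂ρ = 2 * C * V := by rw [hV]; ring
  have hCVnn : 0 ≤ C * V := mul_nonneg hC_pos.le hV_nonneg
  rw [h1]
  linarith [hX]
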